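/- Let μ be a deficient topological measure on a locally compact Hausdorff space X, g ∈ C₀⁺(X), and F a compact subset with μ(F) < ∞. Then the net (∫_V g dμ), indexed by the open sets V containing F directed by reverse inclusion, converges to ∫_F g dμ; that is, lim over open V ⊇ F of ∫₀^∞ μ(V ∩ g⁻¹((t,∞))) dt equals ∫₀^∞ μ(F ∩ g⁻¹([t,∞))) dt. -/

import Mathlib

open MeasureTheory Set Filter Topology ENNReal

/-- A deficient topological measure on a topological space `X`: a set function with values in
`[0,∞]` (recorded on all sets, but constrained only on open and closed sets) that is finitely
additive on disjoint compact sets, inner regular on open sets with respect to compact sets,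
and outer regular on closed sets with respect to open sets. -/
structure DeficientTopologicalMeasure (X : Type*) [TopologicalSpace X] where
  m : Set X → ℝ≥0∞
  additive : ∀ ⦃C K : Set X⦄, IsCompact C → IsCompact K → Disjoint C K →
    m (C ∪ K) = m C + m K
  innerRegular : ∀ ⦃U : Set X⦄, IsOpen U →
    m U = ⨆ (K : Set X) (_ : IsCompact K) (_ : K ⊆ U), m K
  outerRegular : ∀ ⦃F : Set X⦄, IsClosed F →
    m F = ⨅ (U : Set X) (_ : IsOpen U) (_ : F ⊆ U), m U

namespace DeficientTopologicalMeasure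

variable {X : Type*} [TopologicalSpace X]

theorem mono_co (μ : DeficientTopologicalMeasure X) {K U : Set X}
    (hK : IsCompact K) (hU : IsOpen U) (h : K ⊆ U) : μ.m K ≤ μ.m U := by
  rw [μ.innerRegular hU]
  exact le_iSup_of_le K (le_iSup_of_le hK (le_iSup_of_le h le_rfl))

theorem mono_oo (μ : DeficientTopologicalMeasure X) {U W : Set X}
    (hU : IsOpen U) (hW : IsOpen W) (h : U ⊆ W) : μ.m U ≤ μ.m W := by
  rw [μ.innerRegular hU]
  exact iSup_le fun K => iSup_le fun hK => iSup_le fun hKU => μ.mono_co hK hW (hKU.trans h)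

theorem mono_cc [T2Space X] (μ : DeficientTopologicalMeasure X) {K C : Set X}
    (hK : IsCompact K) (hC : IsCompact C) (h : K ⊆ C) : μ.m K ≤ μ.m C := by
  rw [μ.outerRegular hC.isClosed]
  exact le_iInf fun U => le_iInf fun hU => le_iInf fun hCU => μ.mono_co hK hU (h.trans hCU)

end DeficientTopologicalMeasure

/-- The scaling comparison lemma. -/
theorem lemA {f h : ℝ → ℝ≥0∞} (H : ∀ s t : ℝ, 0 < s → s < t → f t ≤ h s) :
    ∫⁻ t in Ioi (0:ℝ), f t ≤ ∫⁻ t in Ioi (0:ℝ), h t := by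
  set A := ∫⁻ t in Ioi (0:ℝ), h t with hA
  by_cases hfin : A = ∞
  · rw [hfin]; exact le_top
  have key : ∀ c : ℝ, c ∈ Ioo (0:ℝ) 1 →
      ∫⁻ t in Ioi (0:ℝ), f t ≤ ENNReal.ofReal c⁻¹ * A := by
    intro c hc
    have hc0 : (0:ℝ) < c := hc.1
    have step1 : ∫⁻ t in Ioi (0:ℝ), f t ≤ ∫⁻ t in Ioi (0:ℝ), h (c * t) := by
      refine setLIntegral_mono' measurableSet_Ioi fun t ht => ?_
      have ht0 : (0:ℝ) < t := ht
      exact H (c * t) t (by positivity) (by nlinarith [hc.2])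
    refine step1.trans (le_of_eq ?_)
    let e : ℝ ≃ᵐ ℝ := (Homeomorph.mulLeft₀ c hc0.ne').toMeasurableEquiv
    have hce : ⇑e = (c * ·) := Homeomorph.coe_mulLeft₀ c hc0.ne'
    have hpre : (c * ·) ⁻¹' (Ioi (0:ℝ)) = Ioi 0 := by
      ext x
      simp only [mem_preimage, mem_Ioi]
      exact ⟨fun hx => by nlinarith, fun hx => by positivity⟩
    have hmap : Measure.map (⇑e) (volume.restrict (Ioi (0:ℝ)))
        = ENNReal.ofReal c⁻¹ • volume.restrict (Ioi (0:ℝ)) := by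
      rw [hce, ← hpre, ← Measure.restrict_map (measurable_const_mul c) measurableSet_Ioi,
        Real.map_volume_mul_left hc0.ne', hpre, Measure.restrict_smul,
        abs_of_pos (inv_pos.mpr hc0)]
    calc ∫⁻ t in Ioi (0:ℝ), h (c * t) = ∫⁻ t, h (e t) ∂(volume.restrict (Ioi (0:ℝ))) := by
          rw [hce]
      _ = ∫⁻ t, h t ∂(Measure.map (⇑e) (volume.restrict (Ioi (0:ℝ)))) :=
          (lintegral_map_equiv h e).symm
      _ = ENNReal.ofReal c⁻¹ * A := by rw [hmap, lintegral_smul_measure, smul_eq_mul]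
  have htend : Tendsto (fun c : ℝ => ENNReal.ofReal c⁻¹ * A) (𝓝[<] (1:ℝ)) (𝓝 A) := by
    have h1 : Tendsto (fun c : ℝ => ENNReal.ofReal c⁻¹) (𝓝[<] (1:ℝ)) (𝓝 1) := by
      have : Tendsto (fun c : ℝ => c⁻¹) (𝓝 (1:ℝ)) (𝓝 1) := by
        simpa using (continuousAt_inv₀ (one_ne_zero (α := ℝ))).tendsto
      have h2 : Tendsto (fun c : ℝ => c⁻¹) (𝓝[<] (1:ℝ)) (𝓝 1) :=
        this.mono_left nhdsWithin_le_nhds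
      have := (ENNReal.continuous_ofReal.tendsto 1).comp h2
      simpa [Function.comp_def] using this
    have := ENNReal.Tendsto.mul_const (b := A) h1 (Or.inl one_ne_zero)
    simpa using this
  exact ge_of_tendsto htend (eventually_of_mem (Ioo_mem_nhdsLT_of_mem (by norm_num)) key)
/-- Let `μ` be a deficient topological measure on a locally compact Hausdorff
space, `g ∈ C₀⁺(X)`, and `F` compact with `μ(F) < ∞`. Then the net of quasi-integrals
`∫_V g dμ = ∫₀^∞ μ(V ∩ g⁻¹((t,∞))) dt`, indexed by the open sets `V ⊇ F` directed by
reverse inclusion, converges to `∫_F g dμ = ∫₀^∞ μ(F ∩ g⁻¹([t,∞))) dt`. -/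
theorem stmt3 {X : Type*} [TopologicalSpace X] [LocallyCompactSpace X] [T2Space X]
    (μ : DeficientTopologicalMeasure X) (g : X → ℝ) (hg : Continuous g)
    (hg0 : ∀ x, 0 ≤ g x) (hginf : Tendsto g (cocompact X) (nhds 0))
    (F : Set X) (hF : IsCompact F) (hFfin : μ.m F < ∞) :
    Tendsto (fun V : {V : Set X // IsOpen V ∧ F ⊆ V} =>
        ∫⁻ t in Ioi (0 : ℝ), μ.m (V.1 ∩ g ⁻¹' (Ioi t)))
      atBot
      (nhds (∫⁻ t in Ioi (0 : ℝ), μ.m (F ∩ g ⁻¹' (Ici t)))) := by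
  set f : ℝ → ℝ≥0∞ := fun t => μ.m (F ∩ g ⁻¹' (Ici t)) with hfdef
  have hcl : ∀ t : ℝ, IsCompact (F ∩ g ⁻¹' (Ici t)) := fun t =>
    hF.inter_right (isClosed_Ici.preimage hg)
  have hop : ∀ (W : Set X), IsOpen W → ∀ t : ℝ, IsOpen (W ∩ g ⁻¹' (Ioi t)) := fun W hW t =>
    hW.inter (isOpen_Ioi.preimage hg)
  have hfanti : Antitone f := fun s t hst =>
    μ.mono_cc (hcl t) (hcl s)
      (inter_subset_inter_right _ (preimage_mono (Ici_subset_Ici.mpr hst)))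
  set J : {V : Set X // IsOpen V ∧ F ⊆ V} → ℝ≥0∞ :=
    fun V => ∫⁻ t in Ioi (0:ℝ), μ.m (V.1 ∩ g ⁻¹' (Ioi t)) with hJdef
  have hJmono : Monotone J := fun V V' hVV' =>
    lintegral_mono fun t => μ.mono_oo (hop _ V.2.1 t) (hop _ V'.2.1 t)
      (inter_subset_inter_left _ hVV')
  -- lower bound
  have hlow : ∀ V, (∫⁻ t in Ioi (0:ℝ), f t) ≤ J V := by
    intro V
    refine lemA fun s t hs hst => μ.mono_co (hcl t) (hop _ V.2.1 s) ?_
    rintro x ⟨hxF, hxt⟩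
    exact ⟨V.2.2 hxF, lt_of_lt_of_le hst hxt⟩
  -- finite-measure open neighborhood U₁
  obtain ⟨U₁, hU₁o, hFU₁, hU₁fin⟩ : ∃ U : Set X, IsOpen U ∧ F ⊆ U ∧ μ.m U < ∞ := by
    have h2 : (⨅ (U : Set X) (_ : IsOpen U) (_ : F ⊆ U), μ.m U) < μ.m F + 1 := by
      rw [← μ.outerRegular hF.isClosed]
      exact ENNReal.lt_add_right hFfin.ne one_ne_zero
    simp only [iInf_lt_iff] at h2
    obtain ⟨U, hUo, hFU, hU⟩ := h2
    exact ⟨U, hUo, hFU, hU.trans (ENNReal.add_lt_top.mpr ⟨hFfin, ENNReal.one_lt_top⟩)⟩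
  -- global bound for g
  obtain ⟨M, hM0, hgM⟩ : ∃ M : ℝ, 0 < M ∧ ∀ x, g x ≤ M := by
    have hev : ∀ᶠ x in cocompact X, g x < 1 := hginf.eventually_lt_const one_pos
    obtain ⟨K, hKc, hKs⟩ := mem_cocompact.mp hev
    obtain ⟨B, hB⟩ := hKc.bddAbove_image hg.continuousOn
    refine ⟨max B 1, lt_of_lt_of_le one_pos (le_max_right _ _), fun x => ?_⟩
    by_cases hx : x ∈ K
    · exact le_trans (hB (mem_image_of_mem g hx)) (le_max_left _ _)
    · exact le_trans (le_of_lt (hKs hx)) (le_max_right _ _)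
  -- μ ∅ = 0
  have hempty : μ.m (∅ : Set X) = 0 := by
    have hfin : μ.m (∅ : Set X) ≠ ∞ :=
      ((μ.mono_co isCompact_empty hU₁o (empty_subset _)).trans_lt hU₁fin).ne
    have hadd := μ.additive isCompact_empty isCompact_empty (by simp)
    rw [union_empty] at hadd
    exact ((ENNReal.add_right_inj hfin).mp (by rw [add_zero]; exact hadd)).symm
  -- finiteness of the integral for open subsets of U₁
  have hJfin : ∀ W : Set X, IsOpen W → W ⊆ U₁ →
      (∫⁻ t in Ioi (0:ℝ), μ.m (W ∩ g ⁻¹' (Ioi t))) ≠ ∞ := by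
    intro W hWo hWU
    have hb : (∫⁻ t in Ioi (0:ℝ), μ.m (W ∩ g ⁻¹' (Ioi t)))
        ≤ ∫⁻ t in Ioi (0:ℝ), (Ioc (0:ℝ) M).indicator (fun _ => μ.m U₁) t := by
      refine setLIntegral_mono' measurableSet_Ioi fun t ht => ?_
      by_cases hgt : t ≤ M
      · have htm : t ∈ Ioc (0:ℝ) M := ⟨ht, hgt⟩
        rw [indicator_of_mem htm]
        exact μ.mono_oo (hop _ hWo t) hU₁o (inter_subset_left.trans hWU)
      · push_neg at hgt
        have hWt : W ∩ g ⁻¹' (Ioi t) = ∅ := by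
          ext x
          simp only [mem_inter_iff, mem_preimage, mem_Ioi, mem_empty_iff_false, iff_false,
            not_and]
          intro _ hx
          linarith [hgM x]
        rw [hWt, hempty]
        exact zero_le
    refine ne_top_of_le_ne_top ?_ hb
    rw [lintegral_indicator measurableSet_Ioc, setLIntegral_const]
    refine ENNReal.mul_ne_top hU₁fin.ne ?_
    rw [Measure.restrict_apply measurableSet_Ioc]
    exact ((measure_mono inter_subset_left).trans_lt measure_Ioc_lt_top).ne
  -- antitonicity in t
  have hanti : ∀ W : Set X, IsOpen W → Antitone (fun t => μ.m (W ∩ g ⁻¹' (Ioi t))) := by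
    intro W hWo s t hst
    exact μ.mono_oo (hop _ hWo t) (hop _ hWo s)
      (inter_subset_inter_right _ (preimage_mono (Ioi_subset_Ioi hst)))
  -- the countable approximating family
  have hAex : ∀ p : ℚ × ℕ, ∃ A : Set X, IsOpen A ∧ F ⊆ A ∧
      ((0:ℝ) < p.1 → μ.m (A ∩ g ⁻¹' (Ioi (p.1:ℝ))) ≤ f p.1 + ((p.2:ℝ≥0∞) + 1)⁻¹) := by
    rintro ⟨q, k⟩
    by_cases hq : (0:ℝ) < q
    · have hCfin : μ.m (F ∩ g ⁻¹' (Ici (q:ℝ))) < ∞ :=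
        lt_of_le_of_lt (μ.mono_cc (hcl q) hF inter_subset_left) hFfin
      have hδ : ((k:ℝ≥0∞) + 1)⁻¹ ≠ 0 := ENNReal.inv_ne_zero.mpr (by simp)
      have h2 : (⨅ (U : Set X) (_ : IsOpen U) (_ : F ∩ g ⁻¹' (Ici (q:ℝ)) ⊆ U), μ.m U)
          < f q + ((k:ℝ≥0∞) + 1)⁻¹ := by
        rw [← μ.outerRegular (hcl (q:ℝ)).isClosed]
        exact ENNReal.lt_add_right hCfin.ne hδ
      simp only [iInf_lt_iff] at h2
      obtain ⟨U, hUo, hCU, hU⟩ := h2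
      refine ⟨U ∪ g ⁻¹' (Iio (q:ℝ)), hUo.union (isOpen_Iio.preimage hg), ?_, fun _ => ?_⟩
      · intro x hxF
        rcases lt_or_ge (g x) (q:ℝ) with h | h
        · exact Or.inr h
        · exact Or.inl (hCU ⟨hxF, h⟩)
      · refine le_trans (μ.mono_oo (hop _ (hUo.union (isOpen_Iio.preimage hg)) _) hUo ?_) hU.le
        rintro x ⟨hx1 | hx2, hxq⟩
        · exact hx1
        · simp only [mem_preimage, mem_Iio] at hx2
          simp only [mem_preimage, mem_Ioi] at hxq
          linarith
    · exact ⟨univ, isOpen_univ, subset_univ _, fun h0 => absurd h0 hq⟩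
  choose Afun hAo hAF hAub using hAex
  let e : ℚ × ℕ ≃ ℕ := Denumerable.eqv (ℚ × ℕ)
  set A' : ℕ → Set X := fun n => Afun (e.symm n) with hA'def
  set W : ℕ → Set X := fun n => U₁ ∩ ⋂ i ∈ Finset.range (n+1), A' i with hWdef
  have hWo : ∀ n, IsOpen (W n) := fun n =>
    hU₁o.inter (isOpen_biInter_finset fun i _ => hAo _)
  have hWF : ∀ n, F ⊆ W n := fun n =>
    subset_inter hFU₁ (subset_iInter₂ fun i _ => hAF _)
  have hWU₁ : ∀ n, W n ⊆ U₁ := fun _ => inter_subset_left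
  have hWanti : Antitone W := by
    intro n m hnm x hx
    refine ⟨hx.1, mem_iInter₂.mpr fun i hi => ?_⟩
    exact mem_iInter₂.mp hx.2 i (Finset.mem_range.mpr
      (lt_of_lt_of_le (Finset.mem_range.mp hi) (by omega)))
  have hWA : ∀ n i, i ≤ n → W n ⊆ A' i := fun n i hin =>
    inter_subset_right.trans (biInter_subset_of_mem (Finset.mem_range.mpr (by omega)))
  set hn : ℕ → ℝ → ℝ≥0∞ := fun n t => μ.m (W n ∩ g ⁻¹' (Ioi t)) with hhndef
  have hmeas : ∀ n, Measurable (hn n) := fun n => (hanti _ (hWo n)).measurable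
  have hnanti : Antitone hn := fun n m hnm t =>
    μ.mono_oo (hop _ (hWo m) t) (hop _ (hWo n) t)
      (inter_subset_inter_left _ (hWanti hnm))
  have hint : (∫⁻ t in Ioi (0:ℝ), ⨅ n, hn n t) = ⨅ n, ∫⁻ t in Ioi (0:ℝ), hn n t :=
    lintegral_iInf hmeas hnanti (hJfin _ (hWo 0) (hWU₁ 0))
  -- ψ ≤ f in integral-comparison form
  have hpsi : ∀ s t : ℝ, 0 < s → s < t → (⨅ n, hn n t) ≤ f s := by
    intro s t hs hst
    obtain ⟨q, hsq, hqt⟩ := exists_rat_btwn hst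
    have hq0 : (0:ℝ) < q := hs.trans hsq
    have key : ∀ k : ℕ, (⨅ n, hn n t) ≤ f s + ((k:ℝ≥0∞)+1)⁻¹ := by
      intro k
      set n := e (q, k) with hndef
      have hA'n : A' n = Afun (q, k) := by
        simp only [hA'def, hndef, Equiv.symm_apply_apply]
      calc (⨅ m, hn m t) ≤ hn n t := iInf_le _ n
        _ ≤ μ.m (W n ∩ g ⁻¹' (Ioi (q:ℝ))) := hanti _ (hWo n) hqt.le
        _ ≤ μ.m (A' n ∩ g ⁻¹' (Ioi (q:ℝ))) :=
            μ.mono_oo (hop _ (hWo n) _) (hop _ (hAo _) _)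
              (inter_subset_inter_left _ (hWA n n le_rfl))
        _ ≤ f q + ((k:ℝ≥0∞)+1)⁻¹ := by rw [hA'n]; exact hAub (q, k) hq0
        _ ≤ f s + ((k:ℝ≥0∞)+1)⁻¹ := add_le_add_left (hfanti hsq.le) _
    have htendk : Tendsto (fun k : ℕ => f s + ((k:ℝ≥0∞)+1)⁻¹) atTop (𝓝 (f s)) := by
      have h0 : Tendsto (fun k : ℕ => ((k:ℝ≥0∞)+1)⁻¹) atTop (𝓝 0) := by
        have := ENNReal.tendsto_inv_nat_nhds_zero.comp (tendsto_add_atTop_nat 1)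
        simpa [Function.comp_def, Nat.cast_add_one] using this
      simpa using tendsto_const_nhds.add h0
    exact ge_of_tendsto htendk (Eventually.of_forall key)
  -- identify the infimum
  have hmain : (⨅ V, J V) = ∫⁻ t in Ioi (0:ℝ), f t := by
    refine le_antisymm ?_ (le_iInf hlow)
    have h1 : (⨅ V, J V) ≤ ⨅ n, J ⟨W n, hWo n, hWF n⟩ := le_iInf fun n => iInf_le _ _
    refine h1.trans ?_
    have h2 : (⨅ n, J ⟨W n, hWo n, hWF n⟩) = ∫⁻ t in Ioi (0:ℝ), ⨅ n, hn n t := hint.symm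
    rw [h2]
    exact lemA hpsi
  have hfinal := tendsto_atBot_iInf hJmono
  rw [hmain] at hfinal
  exact hfinal
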